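/- Let G be a finite group, H ≤ G a subgroup, and ν : H → ℂ× a 1-dimensional character such that for every g ∈ G \ H there exists a ∈ H with gag⁻¹ ∈ H and ν(gag⁻¹) ≠ ν(a). Then Ind_H^G(ν) is irreducible. -/

import Mathlib

/-- The induced representation Ind_H^G(ν) realized concretely: the space of
functions f : G → ℂ with f(a·x) = ν(a)·f(x) for all a ∈ H, on which G acts by
right translation. -/
noncomputable def indSubspace (G : Type) [Group G] (H : Subgroup G) (ν : ↥H →* ℂˣ) :
    Submodule ℂ (G → ℂ) :=
  ⨅ (a : ↥H) (x : G),
    LinearMap.ker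
      ((LinearMap.proj (R := ℂ) (φ := fun _ : G => ℂ) ((a : G) * x))
        - ((ν a : ℂˣ) : ℂ) • LinearMap.proj (R := ℂ) (φ := fun _ : G => ℂ) x)

namespace Stmt19Aux

open scoped Classical

variable {G : Type} [Group G] {H : Subgroup G} {ν : ↥H →* ℂˣ}

lemma mem_ind (f : G → ℂ) :
    f ∈ indSubspace G H ν ↔ ∀ (a : ↥H) (x : G), f ((a : G) * x) = ((ν a : ℂˣ) : ℂ) * f x := by
  simp [indSubspace, Submodule.mem_iInf, LinearMap.mem_ker, sub_eq_zero]

def rho (g : G) : (G → ℂ) →ₗ[ℂ] (G → ℂ) where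
  toFun f := fun x => f (x * g)
  map_add' _ _ := rfl
  map_smul' _ _ := rfl

@[simp] lemma rho_apply (g : G) (f : G → ℂ) (x : G) : rho g f x = f (x * g) := rfl

noncomputable def e1 (H : Subgroup G) (ν : ↥H →* ℂˣ) : G → ℂ :=
  fun x => if h : x ∈ H then ((ν ⟨x, h⟩ : ℂˣ) : ℂ) else 0

lemma e1_mem : e1 H ν ∈ indSubspace G H ν := by
  rw [mem_ind]
  intro a x
  by_cases hx : x ∈ H
  · have hax : (a : G) * x ∈ H := mul_mem a.2 hx
    have : (⟨(a : G) * x, hax⟩ : H) = a * ⟨x, hx⟩ := rfl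
    simp [e1, hx, hax, this, map_mul]
  · have hax : (a : G) * x ∉ H := by
      intro h
      exact hx (by simpa using mul_mem (inv_mem a.2) h)
    simp [e1, hx, hax]

lemma e1_one : e1 H ν 1 = 1 := by
  have h1 : (1 : G) ∈ H := one_mem H
  have : (⟨(1:G), h1⟩ : H) = 1 := rfl
  simp [e1, h1, this]


lemma e1_translate (a : ↥H) :
    (fun x => e1 H ν (x * (a : G))) = ((ν a : ℂˣ) : ℂ) • e1 H ν := by
  funext x
  by_cases hx : x ∈ H
  · have hxa : x * (a : G) ∈ H := mul_mem hx a.2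
    have : (⟨x * (a : G), hxa⟩ : H) = ⟨x, hx⟩ * a := rfl
    simp [e1, hx, hxa, this, map_mul, mul_comm]
  · have hxa : x * (a : G) ∉ H := by
      intro h
      exact hx (by simpa using mul_mem h (inv_mem a.2))
    simp [e1, hx, hxa]

lemma schur [Fintype G]
    (hmackey : ∀ g : G, g ∉ H →
      ∃ (a : G) (ha : a ∈ H) (hc : g * a * g⁻¹ ∈ H),
        ν ⟨g * a * g⁻¹, hc⟩ ≠ ν ⟨a, ha⟩)
    (T : (G → ℂ) →ₗ[ℂ] (G → ℂ))
    (hcomm : ∀ (g : G) (f : G → ℂ), T (fun x => f (x * g)) = fun x => (T f) (x * g))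
    (hT1 : T (e1 H ν) ∈ indSubspace G H ν) :
    ∀ f ∈ indSubspace G H ν, T f = (T (e1 H ν) 1) • f := by
  set h0 : G → ℂ := T (e1 H ν) with hh0
  -- right translation by elements of H scales h0 by ν
  have hright : ∀ (a : ↥H) (x : G), h0 (x * (a : G)) = ((ν a : ℂˣ) : ℂ) * h0 x := by
    intro a x
    have := hcomm (a : G) (e1 H ν)
    rw [e1_translate, map_smul] at this
    have := congrFun this.symm x
    simpa using this
  have hleft := (mem_ind h0).mp hT1
  -- h0 vanishes off H
  have hvanish : ∀ x : G, x ∉ H → h0 x = 0 := by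
    intro x hx
    obtain ⟨a, ha, hc, hne⟩ := hmackey x hx
    have h1 : h0 (x * a) = ((ν ⟨a, ha⟩ : ℂˣ) : ℂ) * h0 x := hright ⟨a, ha⟩ x
    have h2 : h0 (x * a) = ((ν ⟨x * a * x⁻¹, hc⟩ : ℂˣ) : ℂ) * h0 x := by
      have := hleft ⟨x * a * x⁻¹, hc⟩ x
      simpa [mul_assoc] using this
    have hne' : ((ν ⟨x * a * x⁻¹, hc⟩ : ℂˣ) : ℂ) ≠ ((ν ⟨a, ha⟩ : ℂˣ) : ℂ) := by
      intro h; exact hne (Units.ext h)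
    have := h1.symm.trans h2
    rcases mul_eq_mul_right_iff.mp this.symm with h | h
    · exact absurd h hne'
    · exact h
  -- h0 is a multiple of e1
  have hmult : h0 = h0 1 • e1 H ν := by
    funext x
    by_cases hx : x ∈ H
    · have := hleft ⟨x, hx⟩ 1
      simp only [mul_one] at this
      simp [e1, hx, this, mul_comm]
    · simp [e1, hx, hvanish x hx]
  intro f hf
  -- decomposition of f
  have hdecomp : (Fintype.card H : ℂ) • f
      = ∑ x : G, f x • (fun y => e1 H ν (y * x⁻¹)) := by
    funext y
    have hterm : ∀ x : G, f x * e1 H ν (y * x⁻¹) = if y * x⁻¹ ∈ H then f y else 0 := by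
      intro x
      by_cases h : y * x⁻¹ ∈ H
      · have hfy : f ((y * x⁻¹) * x) = ((ν ⟨y * x⁻¹, h⟩ : ℂˣ) : ℂ) * f x :=
          (mem_ind f).mp hf ⟨y * x⁻¹, h⟩ x
        simp only [inv_mul_cancel_right] at hfy
        simp [e1, h, hfy, mul_comm]
      · simp [e1, h]
    have : ∑ x : G, f x * e1 H ν (y * x⁻¹) = ∑ x : G, if y * x⁻¹ ∈ H then f y else 0 := by
      exact Finset.sum_congr rfl (fun x _ => hterm x)
    have hre : ∑ x : G, (if y * x⁻¹ ∈ H then f y else 0)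
        = ∑ z : G, (if z ∈ H then f y else 0) := by
      refine Fintype.sum_equiv ((Equiv.inv G).trans (Equiv.mulRight y)).symm _ _ ?_
      intro x
      congr 1
      simp [Equiv.mulRight, mul_comm]
    have hfin : ∑ z : G, (if z ∈ H then f y else 0) = (Fintype.card ↥H : ℂ) * f y := by
      rw [← Finset.sum_filter, Finset.sum_const]
      rw [Fintype.card_subtype]
      simp [nsmul_eq_mul]
    simp only [Finset.sum_apply, Pi.smul_apply, smul_eq_mul]
    rw [this, hre, hfin]
  have hcard : (Fintype.card ↥H : ℂ) ≠ 0 := by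
    exact_mod_cast (Nat.cast_ne_zero (R := ℂ)).mpr Fintype.card_ne_zero
  have hterm2 : ∀ x : G, T (f x • (fun y => e1 H ν (y * x⁻¹)))
      = (h0 1) • (f x • (fun y => e1 H ν (y * x⁻¹))) := by
    intro x
    rw [map_smul, hcomm x⁻¹ (e1 H ν), smul_comm]
    congr 1
    funext y
    have := congrFun hmult (y * x⁻¹)
    simpa using this
  have key : T ((Fintype.card ↥H : ℂ) • f) = (h0 1) • ((Fintype.card ↥H : ℂ) • f) := by
    rw [hdecomp, map_sum,
      Finset.sum_congr rfl (fun x _ => hterm2 x), ← Finset.smul_sum]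
  rw [map_smul] at key
  rw [smul_comm] at key
  exact smul_right_injective _ hcard key

end Stmt19Aux


open Stmt19Aux in
/-- Mackey's criterion for a 1-dimensional character: if for every
g ∈ G \ H there is a ∈ H with gag⁻¹ ∈ H and ν(gag⁻¹) ≠ ν(a), then Ind_H^G(ν) is
irreducible: it is nonzero and its only right-translation-invariant subspaces are
0 and the whole space. -/
theorem stmt_19 (G : Type) [Group G] [Fintype G]
    (H : Subgroup G) (ν : ↥H →* ℂˣ)
    (hmackey : ∀ g : G, g ∉ H →
      ∃ (a : G) (ha : a ∈ H) (hc : g * a * g⁻¹ ∈ H),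
        ν ⟨g * a * g⁻¹, hc⟩ ≠ ν ⟨a, ha⟩) :
    indSubspace G H ν ≠ ⊥ ∧
    ∀ W : Submodule ℂ (G → ℂ), W ≤ indSubspace G H ν →
      (∀ f ∈ W, ∀ g : G, (fun x : G => f (x * g)) ∈ W) →
      W = ⊥ ∨ W = indSubspace G H ν := by
  classical
  constructor
  · intro hbot
    have h1 := e1_mem (H := H) (ν := ν)
    rw [hbot, Submodule.mem_bot] at h1
    have h2 := congrFun h1 1
    rw [e1_one] at h2
    simp at h2
  · intro W hWV hWinv
    by_cases hW : W = ⊥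
    · exact Or.inl hW
    right
    obtain ⟨w, hwW, hw0⟩ := (Submodule.ne_bot_iff W).mp hW
    obtain ⟨U, hU⟩ := Submodule.exists_isCompl W
    set P : (G → ℂ) →ₗ[ℂ] (G → ℂ) := W.subtype ∘ₗ (W.projectionOnto U hU) with hP
    have hPmem : ∀ v, P v ∈ W := fun v => (W.projectionOnto U hU v).2
    have hPid : ∀ v ∈ W, P v = v := by
      intro v hv
      show (W.subtype) (W.projectionOnto U hU v) = v
      rw [show v = ((⟨v, hv⟩ : W) : G → ℂ) from rfl,
        Submodule.projectionOnto_apply_left]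
      rfl
    set Pbar : (G → ℂ) →ₗ[ℂ] (G → ℂ) :=
      (Fintype.card G : ℂ)⁻¹ • ∑ g : G, ((rho g⁻¹) ∘ₗ P ∘ₗ (rho g)) with hPbar
    have hcardG : (Fintype.card G : ℂ) ≠ 0 := by
      exact_mod_cast (Nat.cast_ne_zero (R := ℂ)).mpr Fintype.card_ne_zero
    have hPbar_apply : ∀ f : G → ℂ, Pbar f
        = (Fintype.card G : ℂ)⁻¹ • ∑ g : G, (rho g⁻¹) (P ((rho g) f)) := by
      intro f
      simp [hPbar, LinearMap.sum_apply]
    have hPbar_mem : ∀ f : G → ℂ, Pbar f ∈ W := by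
      intro f
      rw [hPbar_apply]
      refine Submodule.smul_mem _ _ (Submodule.sum_mem _ fun g _ => ?_)
      exact hWinv _ (hPmem _) g⁻¹
    have hPbar_id : ∀ v ∈ W, Pbar v = v := by
      intro v hv
      rw [hPbar_apply]
      have hterm : ∀ g : G, (rho g⁻¹) (P ((rho g) v)) = v := by
        intro g
        rw [hPid (rho g v) (hWinv v hv g)]
        funext x
        simp [mul_assoc]
      rw [Finset.sum_congr rfl (fun g _ => hterm g), Finset.sum_const,
        Finset.card_univ, ← Nat.cast_smul_eq_nsmul ℂ, smul_smul,
        inv_mul_cancel₀ hcardG, one_smul]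
    have hPbar_comm : ∀ (g : G) (f : G → ℂ),
        Pbar (fun x => f (x * g)) = fun x => (Pbar f) (x * g) := by
      intro h f
      have step : ∑ g : G, (rho g⁻¹) (P ((rho g) (rho h f)))
          = ∑ k : G, (rho h) ((rho k⁻¹) (P ((rho k) f))) := by
        refine (Fintype.sum_equiv (Equiv.mulRight h⁻¹)
          (fun k => (rho h) ((rho k⁻¹) (P ((rho k) f))))
          (fun g => (rho g⁻¹) (P ((rho g) (rho h f)))) ?_).symm
        intro k
        simp only [Equiv.coe_mulRight]
        rw [show (rho (k * h⁻¹)) ((rho h) f) = (rho k) f from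
          funext fun x => by simp [mul_assoc]]
        funext x
        simp [mul_assoc]
      show Pbar ((rho h) f) = (rho h) (Pbar f)
      rw [hPbar_apply, hPbar_apply, map_smul, map_sum, step]
    have hschur := schur (H := H) (ν := ν) hmackey Pbar hPbar_comm
      (hWV (hPbar_mem _))
    set c : ℂ := Pbar (e1 H ν) 1 with hc
    have hcw : c • w = w := by
      rw [← hschur w (hWV hwW)]
      exact hPbar_id w hwW
    have hc1 : c = 1 := by
      have h0 : (c - 1) • w = 0 := by
        rw [sub_smul, one_smul, hcw, sub_self]
      rcases smul_eq_zero.mp h0 with h | h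
      · exact sub_eq_zero.mp h
      · exact absurd h hw0
    refine le_antisymm hWV fun f hf => ?_
    have : Pbar f = f := by rw [hschur f hf, hc1, one_smul]
    rw [← this]
    exact hPbar_mem f
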